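/- Let X ∈ ℝ^{n₁ × n₂} be a matrix of rank exactly r, let R : Fin r → Fin n₁ be an injective selection of r rows such that the r × n₂ submatrix X_R of X formed by the rows R has rank r, and let Q ∈ ℝ^{r × r} be an invertible matrix. Then there exists exactly one pair (Y, Z) with Y ∈ ℝ^{n₁ × r} and Z ∈ ℝ^{r × n₂} such that X = Y·Z and the r × r submatrix of Y formed by the rows R equals Q. -/

import Mathlib

open Matrix

/-- A square real matrix of full rank is invertible (has unit determinant). -/
lemma aux_isUnit_det_of_rank_eq {r : ℕ} (M : Matrix (Fin r) (Fin r) ℝ)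
    (h : M.rank = r) : IsUnit M.det := by
  rw [← Matrix.isUnit_iff_isUnit_det, ← Matrix.mulVec_surjective_iff_isUnit]
  have htop : LinearMap.range M.mulVecLin = ⊤ := by
    apply Submodule.eq_top_of_finrank_eq
    rw [← Matrix.rank, h, Module.finrank_pi]
    simp
  intro y
  obtain ⟨x, hx⟩ := htop ▸ Submodule.mem_top (x := y) (R := ℝ)
  exact ⟨x, hx⟩

/-- Taking a row-submatrix commutes with right multiplication. -/
lemma aux_submatrix_mul {n₁ r k m : ℕ} (Y : Matrix (Fin n₁) (Fin k) ℝ)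
    (Z : Matrix (Fin k) (Fin m) ℝ) (R : Fin r → Fin n₁) :
    (Y * Z).submatrix R id = Y.submatrix R id * Z := by
  ext s j; simp [Matrix.mul_apply, Matrix.submatrix_apply]

/-- A rank-`r` matrix `X` whose rows selected by an injection
`R` form a full-rank `r × n₂` submatrix admits exactly one factorization
`X = Y * Z` with the `R`-rows of `Y` equal to a prescribed invertible matrix
`Q`. -/
theorem unique_rank_factorization_with_prescribed_submatrix {n₁ n₂ r : ℕ}
    (X : Matrix (Fin n₁) (Fin n₂) ℝ) (hX : X.rank = r)
    (R : Fin r → Fin n₁) (hR : Function.Injective R)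
    (hXR : (X.submatrix R id).rank = r)
    (Q : Matrix (Fin r) (Fin r) ℝ) (hQ : IsUnit Q.det) :
    ∃! YZ : Matrix (Fin n₁) (Fin r) ℝ × Matrix (Fin r) (Fin n₂) ℝ,
      X = YZ.1 * YZ.2 ∧ YZ.1.submatrix R id = Q := by
  set A : Matrix (Fin r) (Fin n₂) ℝ := X.submatrix R id with hAdef
  -- A * Aᵀ is invertible, giving a right inverse B of A
  have hAAT : IsUnit (A * Aᵀ).det := by
    apply aux_isUnit_det_of_rank_eq
    rw [Matrix.rank_self_mul_transpose, hXR]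
  obtain ⟨B, hAB⟩ : ∃ B : Matrix (Fin n₂) (Fin r) ℝ, A * B = 1 :=
    ⟨Aᵀ * (A * Aᵀ)⁻¹, by rw [← Matrix.mul_assoc, Matrix.mul_nonsing_inv _ hAAT]⟩
  -- rows of X lie in the span of rows of A
  have hspan : Submodule.span ℝ (Set.range X) = Submodule.span ℝ (Set.range A) := by
    have hle : Submodule.span ℝ (Set.range A) ≤ Submodule.span ℝ (Set.range X) := by
      apply Submodule.span_mono
      rintro _ ⟨s, rfl⟩
      exact ⟨R s, rfl⟩
    have h1 : Module.finrank ℝ (Submodule.span ℝ (Set.range X)) = r := by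
      have := Matrix.rank_eq_finrank_span_row X; rw [hX] at this; exact this.symm
    have h2 : Module.finrank ℝ (Submodule.span ℝ (Set.range A)) = r := by
      have := Matrix.rank_eq_finrank_span_row A; rw [hXR] at this; exact this.symm
    exact (Submodule.eq_of_le_of_finrank_le hle (by rw [h1, h2])).symm
  -- existence of C with X = C * A
  obtain ⟨C, hCX⟩ : ∃ C : Matrix (Fin n₁) (Fin r) ℝ, X = C * A := by
    have hmem : ∀ i, X i ∈ Submodule.span ℝ (Set.range A) := fun i =>
      hspan ▸ Submodule.subset_span ⟨i, rfl⟩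
    have hrange : ∀ i, ∃ c : Fin r → ℝ, Aᵀ.mulVecLin c = X i := by
      intro i
      have h := hmem i
      have h' : X i ∈ LinearMap.range Aᵀ.mulVecLin := by rw [Matrix.range_mulVecLin]; exact h
      exact h'
    choose c hc using hrange
    refine ⟨Matrix.of c, ?_⟩
    ext i j
    have h := congrFun (hc i) j
    simp only [Matrix.mulVecLin_apply, Matrix.mulVec, dotProduct,
      Matrix.transpose_apply] at h
    rw [Matrix.mul_apply, ← h]
    simp [mul_comm]
  -- C restricted to R-rows is the identity
  have hCR : C.submatrix R id = 1 := by
    have h1 : A = C.submatrix R id * A := by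
      conv_lhs => rw [hAdef, hCX, aux_submatrix_mul]
    calc C.submatrix R id = C.submatrix R id * (A * B) := by rw [hAB, Matrix.mul_one]
      _ = (C.submatrix R id * A) * B := (Matrix.mul_assoc _ _ _).symm
      _ = A * B := congrArg (· * B) h1.symm
      _ = 1 := hAB
  refine ⟨(C * Q, Q⁻¹ * A), ⟨?_, ?_⟩, ?_⟩
  · rw [Matrix.mul_assoc, ← Matrix.mul_assoc Q, Matrix.mul_nonsing_inv _ hQ,
      Matrix.one_mul, hCX]
  · rw [aux_submatrix_mul, hCR, Matrix.one_mul]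
  · rintro ⟨Y, Z⟩ ⟨hYZ, hYR⟩
    simp only at hYZ hYR
    have hZ : Z = Q⁻¹ * A := by
      have h1 : A = Q * Z := by
        conv_lhs => rw [hAdef, hYZ, aux_submatrix_mul, hYR]
      rw [h1, ← Matrix.mul_assoc, Matrix.nonsing_inv_mul _ hQ, Matrix.one_mul]
    have hZright : Z * (B * Q) = 1 := by
      rw [hZ, Matrix.mul_assoc, ← Matrix.mul_assoc A, hAB, Matrix.one_mul,
        Matrix.nonsing_inv_mul _ hQ]
    have hY : Y = X * (B * Q) := by
      calc Y = Y * (Z * (B * Q)) := by rw [hZright, Matrix.mul_one]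
        _ = (Y * Z) * (B * Q) := (Matrix.mul_assoc _ _ _).symm
        _ = X * (B * Q) := congrArg (· * (B * Q)) hYZ.symm
    have hQZright : (Q⁻¹ * A) * (B * Q) = 1 := by
      rw [Matrix.mul_assoc, ← Matrix.mul_assoc A, hAB, Matrix.one_mul,
        Matrix.nonsing_inv_mul _ hQ]
    have hCQ : C * Q = X * (B * Q) := by
      calc C * Q = C * Q * ((Q⁻¹ * A) * (B * Q)) := by rw [hQZright, Matrix.mul_one]
        _ = (C * Q * (Q⁻¹ * A)) * (B * Q) := (Matrix.mul_assoc _ _ _).symm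
        _ = X * (B * Q) := by
            rw [Matrix.mul_assoc C, ← Matrix.mul_assoc Q, Matrix.mul_nonsing_inv _ hQ,
              Matrix.one_mul, ← hCX]
    exact Prod.ext (by rw [hY, hCQ]) hZ
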